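/- For all integers ℓ ≥ 1 and q ≥ 3, the map W is a bijection from the set of (ℓ,q)-partial multi Kreweras words to the set L_{V×[ℓ]}(R^q) of V-strict labelings of V×[ℓ] with labels in [q]. -/

import Mathlib

open scoped Classical

/-- The poset `V` on `{A, B, C}` with cover relations `A ⋖ B` and `A ⋖ C`. -/
inductive V : Type
  | A | B | C
deriving DecidableEq

instance : Fintype V where
  elems := {V.A, V.B, V.C}
  complete := by intro x; cases x <;> simp

instance : PartialOrder V where
  le x y := x = y ∨ x = V.A
  le_refl x := Or.inl rfl
  le_trans x y z h1 h2 := by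
    rcases h1 with rfl | rfl
    · exact h2
    · exact Or.inr rfl
  le_antisymm x y h1 h2 := by
    rcases h1 with rfl | rfl
    · rfl
    · rcases h2 with rfl | rfl <;> rfl

/-- A `V`-strict labeling of `V × [ℓ]` with labels in `[q]` (i.e. an element of
`L_{V×[ℓ]}(R^q)`): labels are in `{1, …, q}`, strictly increase along copies of `V`,
and weakly increase along the fibers. -/
def IsVL (ℓ q : ℕ) (f : V → Fin ℓ → ℕ) : Prop :=
  (∀ p i, 1 ≤ f p i ∧ f p i ≤ q) ∧
  (∀ i, f V.A i < f V.B i ∧ f V.A i < f V.C i) ∧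
  (∀ p, Monotone (f p))

/-- The label of `f` at `(p, i)` is raisable: there is another `V`-strict labeling `g`
with `g p i > f p i` agreeing with `f` at all `(p', i')` with `p' ≠ p`. -/
def Raisable (ℓ q : ℕ) (f : V → Fin ℓ → ℕ) (p : V) (i : Fin ℓ) : Prop :=
  ∃ g, IsVL ℓ q g ∧ f p i < g p i ∧ ∀ p' i', p' ≠ p → g p' i' = f p' i'

/-- The label of `f` at `(p, i)` is lowerable. -/
def Lowerable (ℓ q : ℕ) (f : V → Fin ℓ → ℕ) (p : V) (i : Fin ℓ) : Prop :=
  ∃ g, IsVL ℓ q g ∧ g p i < f p i ∧ ∀ p' i', p' ≠ p → g p' i' = f p' i'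

/-- The `k`-th Bender–Knuth involution: in each fiber, the free labels consist of `a`
raisable labels equal to `k` followed by `b` lowerable labels equal to `k+1`; they are
replaced by `b` copies of `k` followed by `a` copies of `k+1`. -/
noncomputable def BK (ℓ q k : ℕ) (f : V → Fin ℓ → ℕ) : V → Fin ℓ → ℕ :=
  fun p i =>
    let S := Finset.univ.filter fun j : Fin ℓ => f p j = k ∧ Raisable ℓ q f p j
    let T := Finset.univ.filter fun j : Fin ℓ => f p j = k + 1 ∧ Lowerable ℓ q f p j
    let U := S ∪ T
    if i ∈ U then (if (U.filter fun j => j < i).card < T.card then k else k + 1)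
    else f p i

/-- `P`-strict promotion `Pro = τ_{q-1} ∘ ⋯ ∘ τ_2 ∘ τ_1`. -/
noncomputable def Pro (ℓ q : ℕ) (f : V → Fin ℓ → ℕ) : V → Fin ℓ → ℕ :=
  (List.range (q - 1)).foldl (fun g k => BK ℓ q (k + 1) g) f

/-- An `(ℓ,q)`-partial multi Kreweras word: a sequence `w_1, …, w_q` of (possibly empty)
multisets from `{A,B,C}` with `ℓ` letters each of `A`, `B`, `C` in total, such that for
each `i ∈ [q]`, neither the number of `B`'s nor the number of `C`'s in `w_1 ⋯ w_i`
exceeds the number of `A`'s in `w_1 ⋯ w_{i−1}`. (Blocks are indexed by `1, …, q`;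
`w i = 0` outside this range.) -/
def IsPMKW (ℓ q : ℕ) (w : ℕ → Multiset V) : Prop :=
  (∀ i, w i ≠ 0 → 1 ≤ i ∧ i ≤ q) ∧
  (∀ p : V, (∑ i ∈ Finset.Icc 1 q, (w i).count p) = ℓ) ∧
  (∀ i, 1 ≤ i → i ≤ q →
    (∑ t ∈ Finset.Icc 1 i, (w t).count V.B) ≤
      (∑ t ∈ Finset.Icc 1 (i - 1), (w t).count V.A) ∧
    (∑ t ∈ Finset.Icc 1 i, (w t).count V.C) ≤
      (∑ t ∈ Finset.Icc 1 (i - 1), (w t).count V.A))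

/-- The defining relation of the map `W`: the multiplicity of the letter `p` in the block
`w_i` equals the number of indices `j` with `f(p, j) = i`. -/
def WRel (ℓ : ℕ) (w : ℕ → Multiset V) (f : V → Fin ℓ → ℕ) : Prop :=
  ∀ (p : V) (i : ℕ),
    (w i).count p = (Finset.univ.filter fun j : Fin ℓ => f p j = i).card

lemma card_val_lt {ℓ m : ℕ} (hm : m ≤ ℓ) :
    (Finset.univ.filter fun j : Fin ℓ => (j:ℕ) < m).card = m := by
  have : (Finset.univ.filter fun j : Fin ℓ => (j:ℕ) < m).card = (Finset.range m).card := by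
    refine Finset.card_bij (fun j _ => (j : ℕ)) ?_ ?_ ?_
    · intro a ha; simp at ha ⊢; exact ha
    · intro a _ b _ hab; exact Fin.val_injective hab
    · intro b hb
      simp only [Finset.mem_range] at hb
      exact ⟨⟨b, lt_of_lt_of_le hb hm⟩, by simp [hb], rfl⟩
  simpa using this

lemma filter_le_card_iff {ℓ : ℕ} (f : Fin ℓ → ℕ) (hf : Monotone f) (j : Fin ℓ) (i : ℕ) :
    f j ≤ i ↔ (j : ℕ) < (Finset.univ.filter fun j' => f j' ≤ i).card := by
  constructor
  · intro h
    have hsub : Finset.Iic j ⊆ Finset.univ.filter fun j' => f j' ≤ i := by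
      intro x hx
      simp only [Finset.mem_Iic] at hx
      simp only [Finset.mem_filter, Finset.mem_univ, true_and]
      exact le_trans (hf hx) h
    calc (j:ℕ) < (Finset.Iic j).card := by
          rw [Fin.card_Iic]; omega
      _ ≤ _ := Finset.card_le_card hsub
  · intro h
    by_contra hc
    push_neg at hc
    have hsub : (Finset.univ.filter fun j' => f j' ≤ i) ⊆ Finset.Iio j := by
      intro x hx
      simp only [Finset.mem_filter, Finset.mem_univ, true_and] at hx
      simp only [Finset.mem_Iio]
      by_contra hx2
      push_neg at hx2
      exact absurd (le_trans (hf hx2) hx) (not_le.mpr hc)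
    have := Finset.card_le_card hsub
    rw [Fin.card_Iio] at this
    omega

lemma card_le_eq_sum {ℓ : ℕ} (f : Fin ℓ → ℕ) (i : ℕ) :
    (Finset.univ.filter fun j => f j ≤ i).card
      = ∑ t ∈ Finset.range (i+1), (Finset.univ.filter fun j => f j = t).card := by
  rw [Finset.card_eq_sum_card_fiberwise (f := f) (t := Finset.range (i+1))
      (fun x hx => by simp only [Finset.mem_coe, Finset.mem_filter] at hx; simp [Nat.lt_succ_of_le hx.2])]
  apply Finset.sum_congr rfl
  intro t ht
  simp only [Finset.mem_range] at ht
  rw [Finset.filter_filter]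
  congr 1
  apply Finset.filter_congr
  intro j _
  constructor
  · rintro ⟨_, h⟩; exact h
  · rintro h; exact ⟨h ▸ Nat.lt_succ_iff.mp ht, h⟩

lemma mono_eq {ℓ : ℕ} (f g : Fin ℓ → ℕ) (hf : Monotone f) (hg : Monotone g)
    (h : ∀ i, (Finset.univ.filter fun j => f j = i).card
        = (Finset.univ.filter fun j => g j = i).card) : f = g := by
  have key : ∀ j i, f j ≤ i ↔ g j ≤ i := by
    intro j i
    rw [filter_le_card_iff f hf, filter_le_card_iff g hg,
        card_le_eq_sum f, card_le_eq_sum g]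
    simp_rw [h]
  funext j
  exact le_antisymm ((key j (g j)).mpr le_rfl) ((key j (f j)).mp le_rfl)

lemma sum_range_succ_eq_Icc (g : ℕ → ℕ) (i : ℕ) (h0 : g 0 = 0) :
    ∑ t ∈ Finset.range (i+1), g t = ∑ t ∈ Finset.Icc 1 i, g t := by
  rw [← Finset.Ico_add_one_right_eq_Icc, Finset.sum_Ico_eq_sum_range, Finset.sum_range_succ']
  simp [h0, Nat.add_comm]

noncomputable def fibc (ℓ : ℕ) (f : V → Fin ℓ → ℕ) (p : V) (i : ℕ) : ℕ :=
  (Finset.univ.filter fun j => f p j = i).card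

noncomputable def wOf (ℓ : ℕ) (f : V → Fin ℓ → ℕ) : ℕ → Multiset V := fun i =>
  Multiset.replicate (fibc ℓ f V.A i) V.A + Multiset.replicate (fibc ℓ f V.B i) V.B
    + Multiset.replicate (fibc ℓ f V.C i) V.C

lemma wOf_count (ℓ : ℕ) (f : V → Fin ℓ → ℕ) (p : V) (i : ℕ) :
    (wOf ℓ f i).count p = fibc ℓ f p i := by
  cases p <;> simp [wOf, Multiset.count_replicate]

lemma sum_fib_Icc {ℓ : ℕ} (f : Fin ℓ → ℕ) (hge : ∀ j, 1 ≤ f j) (i : ℕ) :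
    ∑ t ∈ Finset.Icc 1 i, (Finset.univ.filter fun j => f j = t).card
      = (Finset.univ.filter fun j => f j ≤ i).card := by
  rw [card_le_eq_sum]
  exact (sum_range_succ_eq_Icc _ i (by
    rw [Finset.card_eq_zero, Finset.filter_eq_empty_iff]
    intro j _
    have := hge j
    omega)).symm

/-- For all `ℓ ≥ 1` and `q ≥ 3`, the map `W` is a bijection from `(ℓ,q)`-partial multi
Kreweras words to `L_{V×[ℓ]}(R^q)`: every word corresponds to a unique `V`-strict
labeling and conversely. -/
theorem stmt17 (ℓ q : ℕ) (hℓ : 1 ≤ ℓ) (hq : 3 ≤ q) :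
    (∀ w, IsPMKW ℓ q w → ∃! f, IsVL ℓ q f ∧ WRel ℓ w f) ∧
    (∀ f, IsVL ℓ q f → ∃! w, IsPMKW ℓ q w ∧ WRel ℓ w f) := by
  constructor
  · intro w hw
    obtain ⟨hw1, hw2, hw3⟩ := hw
    have hw0 : ∀ p, (w 0).count p = 0 := by
      intro p
      by_cases h : w 0 = 0
      · simp [h]
      · exact absurd (hw1 0 h).1 (by omega)
    set cnt : V → ℕ → ℕ := fun p i => ∑ t ∈ Finset.range (i+1), (w t).count p with hcnt
    have hcntIcc : ∀ p i, cnt p i = ∑ t ∈ Finset.Icc 1 i, (w t).count p := fun p i =>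
      sum_range_succ_eq_Icc _ i (hw0 p)
    have hmono : ∀ p, Monotone (cnt p) := by
      intro p a b hab
      exact Finset.sum_le_sum_of_subset (Finset.range_subset_range.mpr (by omega))
    have hcntq : ∀ p, cnt p q = ℓ := fun p => by rw [hcntIcc]; exact hw2 p
    have hcnt_ge : ∀ p i, q ≤ i → cnt p i = ℓ := by
      intro p i hi
      induction i with
      | zero => omega
      | succ k ih =>
        rcases Nat.lt_or_ge k q with h | h
        · have : k + 1 = q := by omega
          rw [this]; exact hcntq p
        · have hk := ih h
          have hwz : (w (k+1)).count p = 0 := by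
            by_cases hz : w (k+1) = 0
            · simp [hz]
            · exact absurd (hw1 _ hz).2 (by omega)
          simp only [hcnt, Finset.sum_range_succ] at hk ⊢
          omega
    have hcntle : ∀ p i, cnt p i ≤ ℓ := by
      intro p i
      rcases le_total i q with h | h
      · rw [← hcntq p]; exact hmono p h
      · exact le_of_eq (hcnt_ge p i h)
    have hex : ∀ p (j : Fin ℓ), ∃ i, (j:ℕ) < cnt p i := fun p j =>
      ⟨q, by rw [hcntq]; exact j.isLt⟩
    set f : V → Fin ℓ → ℕ := fun p j => Nat.find (hex p j) with hfdef
    have key : ∀ p (j : Fin ℓ) i, f p j ≤ i ↔ (j:ℕ) < cnt p i := by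
      intro p j i
      constructor
      · intro h; exact lt_of_lt_of_le (Nat.find_spec (hex p j)) (hmono p h)
      · intro h; exact Nat.find_le h
    have hfmono : ∀ p, Monotone (f p) := by
      intro p j j' hj
      refine (key p j _).mpr (lt_of_le_of_lt ?_ ((key p j' _).mp le_rfl))
      exact_mod_cast hj
    have hcnt0 : ∀ p, cnt p 0 = 0 := by
      intro p
      simp only [hcnt, Finset.sum_range_one]
      exact hw0 p
    have hge1 : ∀ p j, 1 ≤ f p j := by
      intro p j
      by_contra h
      push_neg at h
      have h0 : f p j ≤ 0 := by omega
      have := (key p j 0).mp h0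
      rw [hcnt0] at this
      omega
    have hleq : ∀ p j, f p j ≤ q := fun p j =>
      (key p j q).mpr (by rw [hcntq]; exact j.isLt)
    have card_le : ∀ p i, (Finset.univ.filter fun j => f p j ≤ i).card = cnt p i := by
      intro p i
      have heq : (Finset.univ.filter fun j => f p j ≤ i)
          = (Finset.univ.filter fun j : Fin ℓ => (j:ℕ) < cnt p i) := by
        apply Finset.filter_congr
        intro j _
        exact key p j i
      rw [heq, card_val_lt (hcntle p i)]
    have hWrel : WRel ℓ w f := by
      intro p i
      cases i with
      | zero =>
        have : (Finset.univ.filter fun j => f p j = 0) = ∅ := by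
          rw [Finset.filter_eq_empty_iff]
          intro j _
          have := hge1 p j
          omega
        rw [this, hw0 p]
        simp
      | succ k =>
        have hdis : Disjoint (Finset.univ.filter fun j => f p j ≤ k)
            (Finset.univ.filter fun j => f p j = k+1) := by
          rw [Finset.disjoint_left]
          intro j hj hj'
          simp only [Finset.mem_filter] at hj hj'
          omega
        have hun : (Finset.univ.filter fun j => f p j ≤ k+1)
            = (Finset.univ.filter fun j => f p j ≤ k)
              ∪ (Finset.univ.filter fun j => f p j = k+1) := by
          ext j
          simp only [Finset.mem_filter, Finset.mem_union, Finset.mem_univ, true_and]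
          omega
        have h1 := card_le p (k+1)
        rw [hun, Finset.card_union_of_disjoint hdis, card_le p k] at h1
        have h2 : cnt p (k+1) = cnt p k + (w (k+1)).count p := by
          simp [hcnt, Finset.sum_range_succ]
        omega
    have hstrict : ∀ j, f V.A j < f V.B j ∧ f V.A j < f V.C j := by
      intro j
      have hBC : ∀ p, (∀ i, 1 ≤ i → i ≤ q →
          (∑ t ∈ Finset.Icc 1 i, (w t).count p)
            ≤ ∑ t ∈ Finset.Icc 1 (i-1), (w t).count V.A) → f V.A j < f p j := by
        intro p hp
        by_contra h
        push_neg at h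
        have hi1 : 1 ≤ f p j := hge1 p j
        have hiq : f p j ≤ q := hleq p j
        have h1 : (j:ℕ) < cnt p (f p j) := (key p j _).mp le_rfl
        have h2 : cnt p (f p j) ≤ cnt V.A (f p j - 1) := by
          rw [hcntIcc, hcntIcc]
          exact hp _ hi1 hiq
        have h3 : f V.A j ≤ f p j - 1 := (key V.A j _).mpr (lt_of_lt_of_le h1 h2)
        omega
      exact ⟨hBC V.B (fun i h1 h2 => (hw3 i h1 h2).1), hBC V.C (fun i h1 h2 => (hw3 i h1 h2).2)⟩
    refine ⟨f, ⟨⟨fun p j => ⟨hge1 p j, hleq p j⟩, hstrict, hfmono⟩, hWrel⟩, ?_⟩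
    rintro g ⟨hg, hgrel⟩
    funext p
    refine mono_eq (g p) (f p) (hg.2.2 p) (hfmono p) ?_
    intro i
    rw [← hgrel p i]
    exact hWrel p i
  · intro f hf
    obtain ⟨hbd, hstr, hfm⟩ := hf
    have hwrel : WRel ℓ (wOf ℓ f) f := fun p i => wOf_count ℓ f p i
    have hfib0 : ∀ p i, (i < 1 ∨ q < i) → fibc ℓ f p i = 0 := by
      intro p i hi
      rw [fibc, Finset.card_eq_zero, Finset.filter_eq_empty_iff]
      intro j _
      have := hbd p j
      omega
    have hc1 : ∀ i, wOf ℓ f i ≠ 0 → 1 ≤ i ∧ i ≤ q := by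
      intro i hne
      by_contra h
      push_neg at h
      have hi : i < 1 ∨ q < i := by
        rcases Nat.lt_or_ge i 1 with h' | h'
        · exact Or.inl h'
        · exact Or.inr (h h')
      exact hne (by
        simp [wOf, hfib0 V.A i hi, hfib0 V.B i hi, hfib0 V.C i hi])
    have hc2 : ∀ p : V, (∑ i ∈ Finset.Icc 1 q, (wOf ℓ f i).count p) = ℓ := by
      intro p
      rw [Finset.sum_congr rfl (fun t _ => hwrel p t)]
      have := Finset.card_eq_sum_card_fiberwise
        (s := (Finset.univ : Finset (Fin ℓ))) (t := Finset.Icc 1 q) (f := f p)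
        (fun j _ => by
          simp only [Finset.mem_coe, Finset.mem_Icc]
          exact hbd p j)
      simp only [Finset.card_univ, Fintype.card_fin] at this
      exact this.symm
    have hc3 : ∀ i, 1 ≤ i → i ≤ q →
        (∑ t ∈ Finset.Icc 1 i, (wOf ℓ f t).count V.B)
            ≤ (∑ t ∈ Finset.Icc 1 (i - 1), (wOf ℓ f t).count V.A) ∧
          (∑ t ∈ Finset.Icc 1 i, (wOf ℓ f t).count V.C)
            ≤ (∑ t ∈ Finset.Icc 1 (i - 1), (wOf ℓ f t).count V.A) := by
      intro i h1 _
      have hAux : ∀ p : V, (∀ j, f V.A j < f p j) →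
          (∑ t ∈ Finset.Icc 1 i, (wOf ℓ f t).count p)
            ≤ ∑ t ∈ Finset.Icc 1 (i - 1), (wOf ℓ f t).count V.A := by
        intro p hpj
        rw [Finset.sum_congr rfl (fun t _ => hwrel p t),
            Finset.sum_congr rfl (fun t _ => hwrel V.A t)]
        rw [sum_fib_Icc (f p) (fun j => (hbd p j).1),
            sum_fib_Icc (f V.A) (fun j => (hbd V.A j).1)]
        apply Finset.card_le_card
        intro j hj
        simp only [Finset.mem_filter, Finset.mem_univ, true_and] at hj ⊢
        have := hpj j
        omega
      exact ⟨hAux V.B (fun j => (hstr j).1), hAux V.C (fun j => (hstr j).2)⟩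
    refine ⟨wOf ℓ f, ⟨⟨hc1, hc2, hc3⟩, hwrel⟩, ?_⟩
    rintro w' ⟨_, hrel'⟩
    funext i
    rw [Multiset.ext]
    intro p
    rw [hrel' p i, hwrel p i]
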